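/- arXiv:1810.06973 — 5 statements merged into one kernel-verified Lean document; each statement's English description precedes it below -/
import Mathlib

section
/- With θ_min as above (α > 0, γ ∈ (0,1), p, μ ∈ [0,1], 0 < L < M real), for every fixed x ∈ (0,1) the partial derivative of θ_min with respect to L is ≤ 0; it equals −(αγ(1-γ)M/(L(M-L)))·(x(1-x)/(L(M-L)))^α · [ pμ/(γ(x/L)^α + (1-γ)((1-x)/(M-L))^α)² + (1-p)(1-μ)/((1-γ)(x/L)^α + γ((1-x)/(M-L))^α)² ]. -/
open Real Set

noncomputable def thetaMin (M L p mu gam alp x : ℝ) : ℝ :=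
  if x = 0 then p * (1 - mu)
  else if x = 1 then p + (1 - p) * (1 - mu)
  else p * (1 - mu)
    + p * mu * (gam * (x / L) ^ alp)
        / (gam * (x / L) ^ alp + (1 - gam) * ((1 - x) / (M - L)) ^ alp)
    + (1 - p) * (1 - mu) * ((1 - gam) * (x / L) ^ alp)
        / ((1 - gam) * (x / L) ^ alp + gam * ((1 - x) / (M - L)) ^ alp)

noncomputable def thetaMaj (M L p mu gam alp y : ℝ) : ℝ :=
  if y = 0 then p * mu
  else if y = 1 then p + (1 - p) * mu
  else p * mu
    + p * (1 - mu) * (gam * (y / L) ^ alp)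
        / (gam * (y / L) ^ alp + (1 - gam) * ((1 - y) / (M - L)) ^ alp)
    + (1 - p) * mu * ((1 - gam) * (y / L) ^ alp)
        / ((1 - gam) * (y / L) ^ alp + gam * ((1 - y) / (M - L)) ^ alp)

theorem stmt2 (M L p mu gam alp x : ℝ)
    (hM : 0 < M) (hL : 0 < L) (hLM : L < M)
    (hp : p ∈ Icc (0:ℝ) 1) (hmu : mu ∈ Icc (0:ℝ) 1)
    (hgam : gam ∈ Ioo (0:ℝ) 1) (halp : 0 < alp) (hx : x ∈ Ioo (0:ℝ) 1) :
    HasDerivAt (fun L' => thetaMin M L' p mu gam alp x)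
      (-(alp * gam * (1 - gam) * M / (L * (M - L))) * ((x * (1 - x) / (L * (M - L))) ^ alp) *
        (p * mu / (gam * (x / L) ^ alp + (1 - gam) * ((1 - x) / (M - L)) ^ alp) ^ 2
          + (1 - p) * (1 - mu) / ((1 - gam) * (x / L) ^ alp + gam * ((1 - x) / (M - L)) ^ alp) ^ 2)) L
    ∧
    (-(alp * gam * (1 - gam) * M / (L * (M - L))) * ((x * (1 - x) / (L * (M - L))) ^ alp) *
        (p * mu / (gam * (x / L) ^ alp + (1 - gam) * ((1 - x) / (M - L)) ^ alp) ^ 2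
          + (1 - p) * (1 - mu) / ((1 - gam) * (x / L) ^ alp + gam * ((1 - x) / (M - L)) ^ alp) ^ 2)) ≤ 0 := by
  obtain ⟨hx0, hx1⟩ := hx
  obtain ⟨hg0, hg1⟩ := hgam
  have hML : 0 < M - L := by linarith
  have hxL : 0 < x / L := div_pos hx0 hL
  have hxM : 0 < (1 - x) / (M - L) := div_pos (by linarith) hML
  set u := (x / L) ^ alp with hu_def
  set v := ((1 - x) / (M - L)) ^ alp with hv_def
  have hu0 : 0 < u := Real.rpow_pos_of_pos hxL alp
  have hv0 : 0 < v := Real.rpow_pos_of_pos hxM alp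
  have hd1 : 0 < gam * u + (1 - gam) * v := by
    have := mul_pos hg0 hu0
    have := mul_pos (by linarith : (0:ℝ) < 1 - gam) hv0
    linarith
  have hd2 : 0 < (1 - gam) * u + gam * v := by
    have := mul_pos (by linarith : (0:ℝ) < 1 - gam) hu0
    have := mul_pos hg0 hv0
    linarith
  have huv : u * v = (x * (1 - x) / (L * (M - L))) ^ alp := by
    rw [hu_def, hv_def, ← Real.mul_rpow hxL.le hxM.le, div_mul_div_comm]
  have hU : HasDerivAt (fun L' => (x / L') ^ alp) (-(alp * u / L)) L := by
    have h1 : HasDerivAt (fun L' : ℝ => x / L') (-(x / L ^ 2)) L := by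
      have h := (hasDerivAt_const L x).div (hasDerivAt_id L) (ne_of_gt hL)
      refine h.congr_deriv ?_
      simp only [Pi.sub_apply, id_eq]
      field_simp
      ring
    have h2 := h1.rpow_const (p := alp) (Or.inl (ne_of_gt hxL))
    convert h2 using 1
    rw [Real.rpow_sub_one (ne_of_gt hxL), hu_def]
    field_simp
  have hV : HasDerivAt (fun L' => ((1 - x) / (M - L')) ^ alp) (alp * v / (M - L)) L := by
    have h1 : HasDerivAt (fun L' : ℝ => (1 - x) / (M - L')) ((1 - x) / (M - L) ^ 2) L := by
      have h := (hasDerivAt_const L (1 - x)).div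
        ((hasDerivAt_const L M).sub (hasDerivAt_id L)) (ne_of_gt hML)
      refine h.congr_deriv ?_
      simp only [Pi.sub_apply, id_eq]
      field_simp
      ring
    have h2 := h1.rpow_const (p := alp) (Or.inl (ne_of_gt hxM))
    convert h2 using 1
    rw [Real.rpow_sub_one (ne_of_gt hxM), ← hv_def]
    have hx1' : (1 : ℝ) - x ≠ 0 := by linarith
    field_simp
  have hN1 : HasDerivAt (fun L' => p * mu * (gam * (x / L') ^ alp))
      (p * mu * (gam * -(alp * u / L))) L := (hU.const_mul gam).const_mul (p * mu)
  have hD1 : HasDerivAt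
      (fun L' => gam * (x / L') ^ alp + (1 - gam) * ((1 - x) / (M - L')) ^ alp)
      (gam * -(alp * u / L) + (1 - gam) * (alp * v / (M - L))) L :=
    (hU.const_mul gam).add (hV.const_mul (1 - gam))
  have hF1 := hN1.div hD1 (ne_of_gt hd1)
  have hN2 : HasDerivAt (fun L' => (1 - p) * (1 - mu) * ((1 - gam) * (x / L') ^ alp))
      ((1 - p) * (1 - mu) * ((1 - gam) * -(alp * u / L))) L :=
    (hU.const_mul (1 - gam)).const_mul ((1 - p) * (1 - mu))
  have hD2 : HasDerivAt
      (fun L' => (1 - gam) * (x / L') ^ alp + gam * ((1 - x) / (M - L')) ^ alp)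
      ((1 - gam) * -(alp * u / L) + gam * (alp * v / (M - L))) L :=
    (hU.const_mul (1 - gam)).add (hV.const_mul gam)
  have hF2 := hN2.div hD2 (ne_of_gt hd2)
  have hT := ((hasDerivAt_const L (p * (1 - mu))).add hF1).add hF2
  constructor
  · have hfun : (fun L' => thetaMin M L' p mu gam alp x) =
        (fun L' => p * (1 - mu)
          + p * mu * (gam * (x / L') ^ alp)
              / (gam * (x / L') ^ alp + (1 - gam) * ((1 - x) / (M - L')) ^ alp)
          + (1 - p) * (1 - mu) * ((1 - gam) * (x / L') ^ alp)
              / ((1 - gam) * (x / L') ^ alp + gam * ((1 - x) / (M - L')) ^ alp)) := by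
      funext L'
      simp [thetaMin, ne_of_gt hx0, ne_of_lt hx1]
    rw [hfun]
    refine hT.congr_deriv ?_
    rw [← huv]
    field_simp
    ring
  · have hK : 0 ≤ alp * gam * (1 - gam) * M / (L * (M - L)) :=
      le_of_lt (div_pos (mul_pos (mul_pos (mul_pos halp hg0) (by linarith)) hM)
        (mul_pos hL hML))
    have hR : 0 ≤ (x * (1 - x) / (L * (M - L))) ^ alp :=
      Real.rpow_nonneg (le_of_lt (div_pos (mul_pos hx0 (by linarith)) (mul_pos hL hML))) _
    have hS : 0 ≤ p * mu / (gam * u + (1 - gam) * v) ^ 2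
        + (1 - p) * (1 - mu) / ((1 - gam) * u + gam * v) ^ 2 := by
      have h1 : 0 ≤ p * mu := mul_nonneg hp.1 hmu.1
      have h2 : 0 ≤ (1 - p) * (1 - mu) :=
        mul_nonneg (by linarith [hp.2]) (by linarith [hmu.2])
      exact add_nonneg (div_nonneg h1 (sq_nonneg _)) (div_nonneg h2 (sq_nonneg _))
    rw [neg_mul, neg_mul]
    exact neg_nonpos_of_nonneg (mul_nonneg (mul_nonneg hK hR) hS)
end

section
/- Fix α > 0, γ ∈ (0,1), μ ∈ [0,1], 0 < L < M, and x ∈ (0,1). Then the partial derivative of θ_min(x) with respect to p equals (1-μ)·(1 − (1-γ)(x/L)^α/(γ((1-x)/(M-L))^α + (1-γ)(x/L)^α)) + μ·γ(x/L)^α/(γ(x/L)^α + (1-γ)((1-x)/(M-L))^α), and this quantity is ≥ 0. Similarly ∂θ_maj/∂p ≥ 0. -/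
open Real Set

lemma auxDeriv (c1 c2 gam X Z : ℝ) (hc1 : 0 ≤ c1) (hc2 : 0 ≤ c2)
    (hg : gam ∈ Ioo (0:ℝ) 1) (hX : 0 < X) (hZ : 0 < Z) (p : ℝ) :
    HasDerivAt (fun p' : ℝ => p' * c1 + p' * c2 * (gam * X) / (gam * X + (1 - gam) * Z)
        + (1 - p') * c1 * ((1 - gam) * X) / ((1 - gam) * X + gam * Z))
      (c1 * (1 - ((1 - gam) * X) / (gam * Z + (1 - gam) * X))
        + c2 * (gam * X) / (gam * X + (1 - gam) * Z)) p
    ∧ 0 ≤ c1 * (1 - ((1 - gam) * X) / (gam * Z + (1 - gam) * X))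
        + c2 * (gam * X) / (gam * X + (1 - gam) * Z) := by
  obtain ⟨hg0, hg1⟩ := hg
  have hg1' : 0 < 1 - gam := by linarith
  have hD1 : 0 < gam * X + (1 - gam) * Z := by positivity
  have hD2 : 0 < (1 - gam) * X + gam * Z := by positivity
  have hD3 : 0 < gam * Z + (1 - gam) * X := by positivity
  constructor
  · set C := c1 * ((1 - gam) * X) / ((1 - gam) * X + gam * Z) with hC
    set K := c1 + c2 * (gam * X) / (gam * X + (1 - gam) * Z)
      - c1 * ((1 - gam) * X) / ((1 - gam) * X + gam * Z) with hK
    have h : HasDerivAt (fun p' : ℝ => C + K * p') K p := by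
      simpa using ((hasDerivAt_id p).const_mul K).const_add C
    have hfun : (fun p' : ℝ => p' * c1 + p' * c2 * (gam * X) / (gam * X + (1 - gam) * Z)
        + (1 - p') * c1 * ((1 - gam) * X) / ((1 - gam) * X + gam * Z))
        = fun p' : ℝ => C + K * p' := by
      funext p'; rw [hC, hK]; ring
    rw [hfun]
    convert h using 1
    rw [hK]
    field_simp
    ring
  · have hB : ((1 - gam) * X) / (gam * Z + (1 - gam) * X) ≤ 1 := by
      rw [div_le_one hD3]; nlinarith
    have : 0 ≤ c1 * (1 - ((1 - gam) * X) / (gam * Z + (1 - gam) * X)) := by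
      apply mul_nonneg hc1; linarith
    have h2 : 0 ≤ c2 * (gam * X) / (gam * X + (1 - gam) * Z) := by positivity
    linarith


theorem stmt5 (M L p mu gam alp x y : ℝ)
    (hM : 0 < M) (hL : 0 < L) (hLM : L < M)
    (hp : p ∈ Icc (0:ℝ) 1) (hmu : mu ∈ Icc (0:ℝ) 1)
    (hgam : gam ∈ Ioo (0:ℝ) 1) (halp : 0 < alp)
    (hx : x ∈ Ioo (0:ℝ) 1) (hy : y ∈ Ioo (0:ℝ) 1) :
    (HasDerivAt (fun p' => thetaMin M L p' mu gam alp x)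
      ((1 - mu) * (1 - ((1 - gam) * (x / L) ^ alp)
          / (gam * ((1 - x) / (M - L)) ^ alp + (1 - gam) * (x / L) ^ alp))
        + mu * (gam * (x / L) ^ alp)
          / (gam * (x / L) ^ alp + (1 - gam) * ((1 - x) / (M - L)) ^ alp)) p) ∧
    0 ≤ ((1 - mu) * (1 - ((1 - gam) * (x / L) ^ alp)
          / (gam * ((1 - x) / (M - L)) ^ alp + (1 - gam) * (x / L) ^ alp))
        + mu * (gam * (x / L) ^ alp)
          / (gam * (x / L) ^ alp + (1 - gam) * ((1 - x) / (M - L)) ^ alp)) ∧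
    ∃ F : ℝ, HasDerivAt (fun p' => thetaMaj M L p' mu gam alp y) F p ∧ 0 ≤ F := by
  have hx0 : x ≠ 0 := ne_of_gt hx.1
  have hx1 : x ≠ 1 := ne_of_lt hx.2
  have hy0 : y ≠ 0 := ne_of_gt hy.1
  have hy1 : y ≠ 1 := ne_of_lt hy.2
  have hML : (0:ℝ) < M - L := by linarith
  have hX : 0 < (x / L) ^ alp := Real.rpow_pos_of_pos (div_pos hx.1 hL) alp
  have hZ : 0 < ((1 - x) / (M - L)) ^ alp := Real.rpow_pos_of_pos (by
    have : (0:ℝ) < 1 - x := by linarith [hx.2]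
    positivity) alp
  have hY : 0 < (y / L) ^ alp := Real.rpow_pos_of_pos (div_pos hy.1 hL) alp
  have hW : 0 < ((1 - y) / (M - L)) ^ alp := Real.rpow_pos_of_pos (by
    have : (0:ℝ) < 1 - y := by linarith [hy.2]
    positivity) alp
  have hmu0 : 0 ≤ mu := hmu.1
  have hmu1 : 0 ≤ 1 - mu := by linarith [hmu.2]
  have hmin := auxDeriv (1 - mu) mu gam _ _ hmu1 hmu0 hgam hX hZ p
  have hmaj := auxDeriv mu (1 - mu) gam _ _ hmu0 hmu1 hgam hY hW p
  refine ⟨?_, hmin.2, _, ?_, hmaj.2⟩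
  · simpa only [thetaMin, if_neg hx0, if_neg hx1] using hmin.1
  · simpa only [thetaMaj, if_neg hy0, if_neg hy1] using hmaj.1
end

section
/- Let α = 1 and μ = 1, with 0 < γ < 1, 1/2 < p < 1, M > 0 and 0 < L < M real. If L > (1-γ)M/(1 − γp), then y* = γpL/(L − (1-γ)M) satisfies θ_maj(y*) = y*, where θ_maj(y) = p + (1-p)·(1-γ)(y/L)/((1-γ)(y/L) + γ(1-y)/(M-L)), and 0 ≤ y* ≤ 1. If instead (M+1)/2 ≤ L ≤ (1-γ)M/(1 − γp), then y* = 1 is a fixed point of θ_maj. -/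
open Real Set

theorem stmt8 (M L p gam : ℝ) (hM : 0 < M) (hL : 0 < L) (hLM : L < M)
    (hgam : gam ∈ Ioo (0:ℝ) 1) (hp : p ∈ Ioo (1/2 : ℝ) 1) :
    (L > (1 - gam) * M / (1 - gam * p) →
      (p + (1 - p) * ((1 - gam) * ((gam * p * L / (L - (1 - gam) * M)) / L))
          / ((1 - gam) * ((gam * p * L / (L - (1 - gam) * M)) / L)
            + gam * ((1 - gam * p * L / (L - (1 - gam) * M)) / (M - L)))
        = gam * p * L / (L - (1 - gam) * M)) ∧
      0 ≤ gam * p * L / (L - (1 - gam) * M) ∧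
      gam * p * L / (L - (1 - gam) * M) ≤ 1) ∧
    ((M + 1) / 2 ≤ L → L ≤ (1 - gam) * M / (1 - gam * p) →
      p + (1 - p) * ((1 - gam) * ((1:ℝ) / L))
          / ((1 - gam) * ((1:ℝ) / L) + gam * ((1 - (1:ℝ)) / (M - L))) = 1) := by
  obtain ⟨hg0, hg1⟩ := hgam
  obtain ⟨hp1, hp2⟩ := hp
  have hgp : 0 < 1 - gam * p := by nlinarith
  have hML : 0 < M - L := by linarith
  have hp' : 0 < 1 - p := by linarith
  have hp0 : 0 < p := by linarith
  refine ⟨fun h => ?_, fun h1 h2 => ?_⟩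
  · have h' : (1 - gam) * M < L * (1 - gam * p) := by
      rw [gt_iff_lt, div_lt_iff₀ hgp] at h; linarith
    have hD : 0 < L - (1 - gam) * M := by nlinarith [mul_pos hg0 (mul_pos hp0 hL)]
    refine ⟨?_, ?_, ?_⟩
    · have hden : (1 - gam) * ((gam * p * L / (L - (1 - gam) * M)) / L)
          + gam * ((1 - gam * p * L / (L - (1 - gam) * M)) / (M - L))
          = gam * (1 - p) / (M - L) := by
        field_simp
        ring
      rw [hden]
      field_simp
      ring
    · positivity
    · rw [div_le_one hD]; nlinarith
  · have : gam * ((1 - (1:ℝ)) / (M - L)) = 0 := by simp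
    rw [this, add_zero]
    have hg1' : (0:ℝ) < 1 - gam := by linarith
    have h0 : (1 - gam) * ((1:ℝ) / L) ≠ 0 := ne_of_gt (by positivity)
    rw [mul_div_assoc, div_self h0, mul_one]
    ring
end

section
/- Let q ∈ [1/2, 1] and let M be an odd positive integer. Let S ~ Binomial(M, q). Then P(S > M/2) ≥ q. -/
open Real Finset

lemma aux_key13 (p q : ℝ) (hp : 0 ≤ p) (hpq : p ≤ q) (b c : ℕ) :
    q ^ b * p ^ (b + c) ≤ q ^ (b + c) * p ^ b := by
  have hq : 0 ≤ q := hp.trans hpq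
  rw [pow_add, pow_add]
  calc q ^ b * (p ^ b * p ^ c) = (q ^ b * p ^ b) * p ^ c := by ring
    _ ≤ (q ^ b * p ^ b) * q ^ c := by
        exact mul_le_mul_of_nonneg_left (pow_le_pow_left₀ hp hpq c) (by positivity)
    _ = q ^ b * q ^ c * p ^ b := by ring

theorem stmt13 (q : ℝ) (M : ℕ) (hq : q ∈ Set.Icc (1/2 : ℝ) 1)
    (hModd : Odd M) (hMpos : 0 < M) :
    q ≤ ∑ k ∈ (Finset.range (M + 1)).filter (fun k => M < 2 * k),
          (M.choose k : ℝ) * q ^ k * (1 - q) ^ (M - k) := by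
  obtain ⟨m, rfl⟩ := hModd
  obtain ⟨hq2, hq1⟩ := hq
  set p : ℝ := 1 - q with hpdef
  have hp : 0 ≤ p := by simp [hpdef]; linarith
  have hpq : p ≤ q := by simp [hpdef]; linarith
  -- rewrite the filtered sum as a sum over Ico
  have hset : (Finset.range (2 * m + 1 + 1)).filter (fun k => 2 * m + 1 < 2 * k)
      = Finset.Ico (m + 1) (2 * m + 2) := by
    ext k
    simp only [Finset.mem_filter, Finset.mem_range, Finset.mem_Ico]
    omega
  rw [hset]
  rw [Finset.sum_Ico_eq_sum_range]
  have hcard : 2 * m + 2 - (m + 1) = m + 1 := by omega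
  rw [hcard]
  -- expand q via binomial theorem
  have hbin : q = ∑ j ∈ Finset.range (2 * m + 1),
      (Nat.choose (2 * m) j : ℝ) * q ^ (j + 1) * p ^ (2 * m - j) := by
    have h1 : (q + p) ^ (2 * m) = ∑ j ∈ Finset.range (2 * m + 1),
        q ^ j * p ^ (2 * m - j) * (Nat.choose (2 * m) j : ℝ) := add_pow q p (2 * m)
    have h2 : (q + p) ^ (2 * m) = 1 := by simp [hpdef]
    calc q = q * (q + p) ^ (2 * m) := by rw [h2]; ring
      _ = ∑ j ∈ Finset.range (2 * m + 1),
          (Nat.choose (2 * m) j : ℝ) * q ^ (j + 1) * p ^ (2 * m - j) := by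
        rw [h1, Finset.mul_sum]
        apply Finset.sum_congr rfl
        intro j hj
        ring
  have hbin2 : q = (∑ j ∈ Finset.range m,
        (Nat.choose (2 * m) j : ℝ) * q ^ (j + 1) * p ^ (2 * m - j))
      + ∑ i ∈ Finset.range (m + 1),
        (Nat.choose (2 * m) (m + i) : ℝ) * q ^ (m + i + 1) * p ^ (2 * m - (m + i)) := by
    refine hbin.trans ?_
    rw [← Finset.sum_range_add, show m + (m + 1) = 2 * m + 1 from by omega]
  -- Pascal on the RHS
  have hR : ∀ i ∈ Finset.range (m + 1),
      ((2 * m + 1).choose (m + 1 + i) : ℝ) * q ^ (m + 1 + i) * p ^ (2 * m + 1 - (m + 1 + i))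
      = (Nat.choose (2 * m) (m + i) : ℝ) * q ^ (m + i + 1) * p ^ (2 * m - (m + i))
        + (Nat.choose (2 * m) (m + 1 + i) : ℝ) * q ^ (m + 1 + i) * p ^ (m - i) := by
    intro i hi
    simp only [Finset.mem_range] at hi
    have e1 : m + 1 + i = (m + i) + 1 := by omega
    have e2 : (2 * m + 1).choose (m + 1 + i) = (2 * m).choose (m + i) + (2 * m).choose (m + i + 1) := by
      rw [e1]; exact Nat.choose_succ_succ (2 * m) (m + i)
    have e3 : 2 * m + 1 - (m + 1 + i) = m - i := by omega
    have e4 : 2 * m - (m + i) = m - i := by omega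
    rw [e2, e3, e4]
    push_cast
    rw [e1]
    ring
  rw [Finset.sum_congr rfl hR, Finset.sum_add_distrib]
  conv_lhs => rw [hbin2]
  -- The A-part matches the second piece of q's expansion
  have hA : ∀ i ∈ Finset.range (m + 1),
      (Nat.choose (2 * m) (m + i) : ℝ) * q ^ (m + i + 1) * p ^ (2 * m - (m + i)) =
      (Nat.choose (2 * m) (m + i) : ℝ) * q ^ ((m + i) + 1) * p ^ (2 * m - (m + i)) := by
    intro i _; rfl
  -- reduce to: sum_{j<m} g j ≤ B
  have hB : ∑ j ∈ Finset.range m, (Nat.choose (2 * m) j : ℝ) * q ^ (j + 1) * p ^ (2 * m - j)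
      ≤ ∑ i ∈ Finset.range (m + 1),
          (Nat.choose (2 * m) (m + 1 + i) : ℝ) * q ^ (m + 1 + i) * p ^ (m - i) := by
    rw [Finset.sum_range_succ]
    have hz : (Nat.choose (2 * m) (m + 1 + m) : ℝ) * q ^ (m + 1 + m) * p ^ (m - m) = 0 := by
      have : Nat.choose (2 * m) (m + 1 + m) = 0 := Nat.choose_eq_zero_of_lt (by omega)
      simp [this]
    rw [hz, add_zero]
    rw [← Finset.sum_range_reflect]
    apply Finset.sum_le_sum
    intro i hi
    simp only [Finset.mem_range] at hi
    have e1 : m - 1 - i + 1 = m - i := by omega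
    have e2 : 2 * m - (m - 1 - i) = m + 1 + i := by omega
    have e3 : (2 * m).choose (m - 1 - i) = (2 * m).choose (m + 1 + i) := by
      have h4 : m + 1 + i ≤ 2 * m := by omega
      have := Nat.choose_symm h4
      have e5 : 2 * m - (m + 1 + i) = m - 1 - i := by omega
      rw [e5] at this
      exact this
    rw [e1, e2, e3]
    have hkey := aux_key13 p q hp hpq (m - i) (2 * i + 1)
    have e6 : m - i + (2 * i + 1) = m + 1 + i := by omega
    rw [e6] at hkey
    calc ((2 * m).choose (m + 1 + i) : ℝ) * q ^ (m - i) * p ^ (m + 1 + i)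
        = ((2 * m).choose (m + 1 + i) : ℝ) * (q ^ (m - i) * p ^ (m + 1 + i)) := by ring
      _ ≤ ((2 * m).choose (m + 1 + i) : ℝ) * (q ^ (m + 1 + i) * p ^ (m - i)) := by
          exact mul_le_mul_of_nonneg_left hkey (by positivity)
      _ = ((2 * m).choose (m + 1 + i) : ℝ) * q ^ (m + 1 + i) * p ^ (m - i) := by ring
  linarith [hB]
end

section
/- Fix μ = 1, α = 1, 1/2 < p < 1, M > 0 and consider γ ∈ [0, γ̄] with γ̄ = 1/(p + (1-p)M). Then for every real L with (M+1)/2 ≤ L ≤ M−1, we have L ≤ (1-γ)M/(1 − γp); hence the majority fixed point equals y*_L = 1, i.e., θ_maj(1) = 1 where θ_maj(y) = p + (1-p)(1-γ)(y/L)/((1-γ)(y/L) + γ(1-y)/(M-L)). -/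
open Set

theorem stmt17 (M p gam : ℝ) (hM : 0 < M) (hp : p ∈ Ioo (1/2 : ℝ) 1)
    (hgam : gam ∈ Icc (0:ℝ) (1 / (p + (1 - p) * M))) :
    ∀ L : ℝ, (M + 1) / 2 ≤ L → L ≤ M - 1 →
      L ≤ (1 - gam) * M / (1 - gam * p) ∧
      p + (1 - p) * ((1 - gam) * ((1:ℝ) / L))
          / ((1 - gam) * ((1:ℝ) / L) + gam * ((1 - (1:ℝ)) / (M - L))) = 1 := by
  obtain ⟨hp1, hp2⟩ := hp
  obtain ⟨hg0, hg1⟩ := hgam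
  intro L hL1 hL2
  have hM3 : 3 ≤ M := by linarith
  have hden : (0:ℝ) < p + (1 - p) * M := by nlinarith
  have hgam1 : gam < 1 := by
    have : 1 / (p + (1 - p) * M) < 1 := by
      rw [div_lt_one hden]; nlinarith
    linarith
  have hL0 : (0:ℝ) < L := by linarith
  have hgd : gam * (p + (1 - p) * M) ≤ 1 := by
    rw [← le_div_iff₀ hden]; exact hg1
  have hgp : 1 - gam * p > 0 := by nlinarith
  constructor
  · rw [le_div_iff₀ hgp]
    nlinarith [mul_nonneg hg0 (sub_nonneg.mpr hL2)]
  · have h1 : (1 - gam) * ((1:ℝ) / L) ≠ 0 := by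
      apply mul_ne_zero (by linarith)
      positivity
    have : (1 - (1:ℝ)) / (M - L) = 0 := by simp
    rw [this, mul_zero, add_zero, mul_div_assoc, div_self h1]
    ring
end
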